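/- Let A be a D-algebra over a commutative ring k and M a D-bimodule over A. Then the Dynkin differential d_D on Dynkin cochains satisfies d_D ∘ d_D = 0, so (CD^*(A;M), d_D) is a cochain complex. -/

import Mathlib

open scoped Classical

section NestedSets

variable {V : Type*} [Fintype V] [DecidableEq V]

/-- The (induced subgraph on the) finite vertex set `B` is connected (in particular nonempty). -/
def Conn (G : SimpleGraph V) (B : Finset V) : Prop :=
  (G.induce (B : Set V)).Connected

/-- Two vertex sets are orthogonal: no edge of `G` joins a vertex of one to a vertex
of the other. -/
def Orth (G : SimpleGraph V) (B C : Finset V) : Prop :=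
  ∀ a ∈ B, ∀ b ∈ C, ¬ G.Adj a b

/-- Two subdiagrams are compatible if one contains the other or they are orthogonal. -/
def Compat (G : SimpleGraph V) (B C : Finset V) : Prop :=
  B ⊆ C ∨ C ⊆ B ∨ Orth G B C

/-- A nested set on the (connected) diagram `D` with vertex set `V`: a collection of
pairwise compatible connected subdiagrams containing `D` itself. -/
def Nested (G : SimpleGraph V) (H : Finset (Finset V)) : Prop :=
  Finset.univ ∈ H ∧ (∀ B ∈ H, Conn G B) ∧ ∀ B ∈ H, ∀ C ∈ H, Compat G B C

/-- `iN H B` is the union of the elements of `H` strictly contained in `B`;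
this coincides with the union of the *maximal* elements of `H` strictly contained in `B`. -/
noncomputable def iN (H : Finset (Finset V)) (B : Finset V) : Finset V :=
  (H.filter fun C => C ⊂ B).sup id

/-- `nN H B = n(B;H)` is the number of vertices of `B` not covered by the maximal
elements of `H` strictly contained in `B`. -/
noncomputable def nN (H : Finset (Finset V)) (B : Finset V) : ℕ :=
  (B \ iN H B).card

/-- `C` is a connected component of (the induced subgraph on) `S`. -/
def IsCC (G : SimpleGraph V) (S C : Finset V) : Prop :=
  C ⊆ S ∧ Conn G C ∧ ∀ C', C ⊆ C' → C' ⊆ S → Conn G C' → C' = C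

/-- A maximal nested set on `D`. -/
def MaxNested (G : SimpleGraph V) (F : Finset (Finset V)) : Prop :=
  Nested G F ∧ ∀ K, Nested G K → F ⊆ K → K = F

end NestedSets

section Dynkin

variable {V : Type*} [Fintype V] [DecidableEq V] {M : Type*} [AddCommGroup M]

/-- `compVal Gr m B v rest` is the value of the cochain `m` on the connected component of
`B \ {v}` containing all the vertices of `rest`, and `0` if no such component exists. -/
noncomputable def compVal (Gr : SimpleGraph V) {p : ℕ}
    (m : Finset V → (Fin p → V) → M) (B : Finset V) (v : V) (rest : Fin p → V) : M :=
  if h : ∃ C : Finset V, IsCC Gr (B.erase v) C ∧ ∀ j, rest j ∈ C then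
    m h.choose rest
  else 0

/-- The Dynkin differential in positive degrees:
`(d m)_{(B;α)} = ∑ᵢ (-1)^{i-1} ( m_{(B; α∖αᵢ)} - m_{(conn. comp. of B∖αᵢ containing α∖αᵢ; α∖αᵢ)} )`. -/
noncomputable def dynD (Gr : SimpleGraph V) {p : ℕ}
    (m : Finset V → (Fin p → V) → M) : Finset V → (Fin (p + 1) → V) → M :=
  fun B α => ∑ i : Fin (p + 1),
    ((-1 : ℤ) ^ (i : ℕ)) •
      (m B (fun j => α (i.succAbove j)) -
        compVal Gr m B (α i) (fun j => α (i.succAbove j)))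

/-- The set of connected components of (the induced subgraph on) `S`. -/
noncomputable def ccomps (Gr : SimpleGraph V) (S : Finset V) : Finset (Finset V) :=
  S.powerset.filter (IsCC Gr S)

/-- The Dynkin differential in degree 0:
`(d m)_{(B;α)} = m_B - ∑_{B' comp. of B∖α} m_{B'}`. -/
noncomputable def dynD0 (Gr : SimpleGraph V) (m : Finset V → M) :
    Finset V → (Fin 1 → V) → M :=
  fun B α => m B - ∑ C ∈ ccomps Gr (B.erase (α 0)), m C

end Dynkin

set_option linter.unusedSectionVars false
section Aux
variable {V : Type*} [Fintype V] [DecidableEq V]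
variable {Gr : SimpleGraph V}

lemma conn_nonempty {B : Finset V} (h : Conn Gr B) : B.Nonempty := by
  obtain ⟨⟨x, hx⟩⟩ := h.nonempty
  exact ⟨x, hx⟩

lemma conn_singleton (v : V) : Conn Gr {v} := by
  unfold Conn
  rw [SimpleGraph.connected_iff]
  refine ⟨?_, ⟨⟨v, by simp⟩⟩⟩
  intro a b
  have : a = b := Subtype.ext (by
    have ha := a.2; have hb := b.2
    simp only [Finset.coe_singleton, Set.mem_singleton_iff] at ha hb
    rw [ha, hb])
  rw [this]

lemma conn_union {B C : Finset V} (hB : Conn Gr B) (hC : Conn Gr C)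
    (h : (B ∩ C).Nonempty) : Conn Gr (B ∪ C) := by
  have hne : ((B : Set V) ∩ (C : Set V)).Nonempty := by
    obtain ⟨x, hx⟩ := h
    simp only [Finset.mem_inter] at hx
    exact ⟨x, hx.1, hx.2⟩
  have := SimpleGraph.induce_union_connected (G := Gr) (s := (B : Set V)) (t := (C : Set V))
    (SimpleGraph.Connected.preconnected hB) (SimpleGraph.Connected.preconnected hC) hne
  unfold Conn
  rwa [Finset.coe_union]

lemma exists_cc {S T : Finset V} (hT : Conn Gr T) (hTS : T ⊆ S) :
    ∃ C, IsCC Gr S C ∧ T ⊆ C := by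
  set H : Finset (Finset V) := S.powerset.filter (fun C => T ⊆ C ∧ Conn Gr C) with hH
  have hTH : T ∈ H := by simp [hH, Finset.mem_powerset, hTS, hT]
  obtain ⟨C, hCH, hmax⟩ := H.exists_maximal ⟨T, hTH⟩
  simp only [hH, Finset.mem_filter, Finset.mem_powerset] at hCH
  refine ⟨C, ⟨hCH.1, hCH.2.2, ?_⟩, hCH.2.1⟩
  intro C' hCC' hC'S hC'
  by_contra hne
  exact hne (le_antisymm (hmax (y := C') (by simp [hH, Finset.mem_filter, Finset.mem_powerset, hC'S,
    hCH.2.1.trans hCC', hC']) hCC') hCC')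

lemma cc_eq_of_subset {S C : Finset V} (hC : IsCC Gr S C) {E : Finset V} (hE : Conn Gr E)
    (hES : E ⊆ S) (hmeet : (E ∩ C).Nonempty) : E ∪ C = C :=
  hC.2.2 _ Finset.subset_union_right (Finset.union_subset hES hC.1)
    (conn_union hE hC.2.1 hmeet)

lemma cc_subset {S C E : Finset V} (hC : IsCC Gr S C) (hE : Conn Gr E)
    (hES : E ⊆ S) (hmeet : (E ∩ C).Nonempty) : E ⊆ C := by
  have := cc_eq_of_subset hC hE hES hmeet
  exact this ▸ Finset.subset_union_left

lemma cc_unique {S C C' : Finset V} (hC : IsCC Gr S C) (hC' : IsCC Gr S C')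
    (hmeet : (C ∩ C').Nonempty) : C = C' :=
  le_antisymm (cc_subset hC' hC.2.1 hC.1 hmeet)
    (cc_subset hC hC'.2.1 hC'.1 (by rwa [Finset.inter_comm]))

lemma cc_erase {S C : Finset V} {w : V} (hC : IsCC Gr S C) (hw : w ∉ C) :
    IsCC Gr (S.erase w) C := by
  refine ⟨fun x hx => Finset.mem_erase.2 ⟨fun e => hw (e ▸ hx), hC.1 hx⟩, hC.2.1, ?_⟩
  intro C' h1 h2 h3
  exact hC.2.2 C' h1 (h2.trans (Finset.erase_subset _ _)) h3

lemma cc_trans {S C F : Finset V} {w : V} (hC : IsCC Gr S C)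
    (hF : IsCC Gr (C.erase w) F) : IsCC Gr (S.erase w) F := by
  have hFne : F.Nonempty := conn_nonempty hF.2.1
  refine ⟨hF.1.trans (Finset.erase_subset_erase _ hC.1), hF.2.1, ?_⟩
  intro C' h1 h2 h3
  have hC'S : C' ⊆ S := h2.trans (Finset.erase_subset _ _)
  have hC'C : C' ⊆ C := by
    apply cc_subset hC h3 hC'S
    obtain ⟨x, hx⟩ := hFne
    exact ⟨x, Finset.mem_inter.2 ⟨h1 hx, (Finset.erase_subset _ _) (hF.1 hx)⟩⟩
  have hC'Cw : C' ⊆ C.erase w := fun x hx => Finset.mem_erase.2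
    ⟨fun e => (Finset.mem_erase.1 (h2 hx)).1 e, hC'C hx⟩
  exact hF.2.2 C' h1 hC'Cw h3

lemma cc_restrict {S C E : Finset V} {w : V} (hC : IsCC Gr S C)
    (hE : IsCC Gr (S.erase w) E) (hEC : E ⊆ C) : IsCC Gr (C.erase w) E := by
  refine ⟨fun x hx => Finset.mem_erase.2 ⟨(Finset.mem_erase.1 (hE.1 hx)).1, hEC hx⟩, hE.2.1, ?_⟩
  intro C' h1 h2 h3
  exact hE.2.2 C' h1 (h2.trans (Finset.erase_subset_erase _ hC.1)) h3
end Aux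

section Aux2
variable {V : Type*} [Fintype V] [DecidableEq V] {M : Type*} [AddCommGroup M]
variable {Gr : SimpleGraph V}

lemma compVal_spec {p : ℕ} [NeZero p] (m : Finset V → (Fin p → V) → M) (B : Finset V) (v : V)
    (rest : Fin p → V) {C : Finset V} (hC : IsCC Gr (B.erase v) C) (hrest : ∀ j, rest j ∈ C) :
    compVal Gr m B v rest = m C rest := by
  have hex : ∃ C : Finset V, IsCC Gr (B.erase v) C ∧ ∀ j, rest j ∈ C := ⟨C, hC, hrest⟩
  rw [compVal, dif_pos hex]
  congr 1
  exact cc_unique hex.choose_spec.1 hC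
    ⟨rest 0, Finset.mem_inter.2 ⟨hex.choose_spec.2 0, hrest 0⟩⟩

lemma compVal_neg {p : ℕ} (m : Finset V → (Fin p → V) → M) (B : Finset V) (v : V)
    (rest : Fin p → V)
    (h : ¬ ∃ C : Finset V, IsCC Gr (B.erase v) C ∧ ∀ j, rest j ∈ C) :
    compVal Gr m B v rest = 0 := dif_neg h

lemma mem_ccomps {S C : Finset V} : C ∈ ccomps Gr S ↔ IsCC Gr S C := by
  simp only [ccomps, Finset.mem_filter, Finset.mem_powerset]
  exact ⟨fun h => h.2, fun h => ⟨h.1, h⟩⟩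
end Aux2

section Aux3
variable {V : Type*} [Fintype V] [DecidableEq V] {M : Type*} [AddCommGroup M]
variable {Gr : SimpleGraph V}

noncomputable def cval (Gr : SimpleGraph V) {p : ℕ} (B : Finset V) (v : V)
    (rest : Fin p → V) (f : Finset V → M) : M :=
  if h : ∃ C : Finset V, IsCC Gr (B.erase v) C ∧ ∀ j, rest j ∈ C then f h.choose else 0

lemma compVal_eq_cval {p : ℕ} (m : Finset V → (Fin p → V) → M) (B : Finset V) (v : V)
    (rest : Fin p → V) : compVal Gr m B v rest = cval Gr B v rest (fun S => m S rest) := rfl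

lemma cval_spec {p : ℕ} [NeZero p] (B : Finset V) (v : V) (rest : Fin p → V)
    (f : Finset V → M) {C : Finset V} (hC : IsCC Gr (B.erase v) C) (hrest : ∀ j, rest j ∈ C) :
    cval Gr B v rest f = f C := by
  have hex : ∃ C : Finset V, IsCC Gr (B.erase v) C ∧ ∀ j, rest j ∈ C := ⟨C, hC, hrest⟩
  rw [cval, dif_pos hex]
  congr 1
  exact cc_unique hex.choose_spec.1 hC
    ⟨rest 0, Finset.mem_inter.2 ⟨hex.choose_spec.2 0, hrest 0⟩⟩

lemma cval_neg {p : ℕ} (B : Finset V) (v : V) (rest : Fin p → V) (f : Finset V → M)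
    (h : ¬ ∃ C : Finset V, IsCC Gr (B.erase v) C ∧ ∀ j, rest j ∈ C) :
    cval Gr B v rest f = 0 := dif_neg h

lemma cval_sum {p : ℕ} (B : Finset V) (v : V) (rest : Fin p → V) {ι : Type*}
    (s : Finset ι) (f : ι → Finset V → M) :
    cval Gr B v rest (fun S => ∑ i ∈ s, f i S) = ∑ i ∈ s, cval Gr B v rest (f i) := by
  unfold cval
  split_ifs with h
  · rfl
  · simp

lemma cval_smul {p : ℕ} (B : Finset V) (v : V) (rest : Fin p → V) (c : ℤ)
    (f : Finset V → M) :
    cval Gr B v rest (fun S => c • f S) = c • cval Gr B v rest f := by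
  unfold cval
  split_ifs with h
  · rfl
  · simp

lemma cval_sub {p : ℕ} (B : Finset V) (v : V) (rest : Fin p → V) (f g : Finset V → M) :
    cval Gr B v rest (fun S => f S - g S) = cval Gr B v rest f - cval Gr B v rest g := by
  unfold cval
  split_ifs with h
  · rfl
  · simp

lemma compVal_erase_comm {q : ℕ} [NeZero q] (m : Finset V → (Fin q → V) → M)
    (B : Finset V) (u w : V) (ρ : Fin q → V) :
    compVal Gr m (B.erase u) w ρ = compVal Gr m (B.erase w) u ρ := by
  have hc : (B.erase u).erase w = (B.erase w).erase u := Finset.erase_right_comm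
  by_cases h : ∃ E : Finset V, IsCC Gr ((B.erase u).erase w) E ∧ ∀ k, ρ k ∈ E
  · obtain ⟨E, hE, hρ⟩ := h
    rw [compVal_spec m _ _ _ hE hρ, compVal_spec m _ _ _ (hc ▸ hE) hρ]
  · rw [compVal_neg m _ _ _ h, compVal_neg m _ _ _ (by rw [← hc] at *; exact h)]

lemma key {q : ℕ} (m : Finset V → (Fin (q + 1) → V) → M) (B : Finset V) (u : V)
    (β : Fin (q + 2) → V) (j : Fin (q + 2)) :
    cval Gr B u β (fun S => m S (fun k => β (j.succAbove k)))
      - cval Gr B u β (fun S => compVal Gr m S (β j) (fun k => β (j.succAbove k)))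
    = compVal Gr m B u (fun k => β (j.succAbove k))
      - compVal Gr m (B.erase u) (β j) (fun k => β (j.succAbove k)) := by
  set w := β j with hw
  set ρ : Fin (q + 1) → V := fun k => β (j.succAbove k) with hρdef
  by_cases h1 : ∃ C : Finset V, IsCC Gr (B.erase u) C ∧ ∀ k, ρ k ∈ C
  · obtain ⟨C, hC, hρ⟩ := h1
    by_cases h2 : w ∈ C
    · have hall : ∀ jj, β jj ∈ C := by
        rw [Fin.forall_iff_succAbove j]
        exact ⟨h2, hρ⟩
      rw [cval_spec _ _ _ _ hC hall, cval_spec _ _ _ _ hC hall,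
        compVal_spec m _ _ _ hC hρ]
      have : compVal Gr m C w ρ = compVal Gr m (B.erase u) w ρ := by
        by_cases h3 : ∃ E : Finset V, IsCC Gr (C.erase w) E ∧ ∀ k, ρ k ∈ E
        · obtain ⟨E, hE, hρE⟩ := h3
          rw [compVal_spec m _ _ _ hE hρE, compVal_spec m _ _ _ (cc_trans hC hE) hρE]
        · rw [compVal_neg m _ _ _ h3, compVal_neg m _ _ _ ?_]
          rintro ⟨E, hE, hρE⟩
          have hEC : E ⊆ C := cc_subset hC hE.2.1
            (hE.1.trans (Finset.erase_subset _ _))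
            ⟨ρ 0, Finset.mem_inter.2 ⟨hρE 0, hρ 0⟩⟩
          exact h3 ⟨E, cc_restrict hC hE hEC, hρE⟩
      rw [this]
    · have hnall : ¬ ∃ C' : Finset V, IsCC Gr (B.erase u) C' ∧ ∀ jj, β jj ∈ C' := by
        rintro ⟨C', hC', hall⟩
        have : C' = C := cc_unique hC' hC
          ⟨ρ 0, Finset.mem_inter.2 ⟨hall (j.succAbove 0), hρ 0⟩⟩
        exact h2 (this ▸ hall j)
      rw [cval_neg _ _ _ _ hnall, cval_neg _ _ _ _ hnall,
        compVal_spec m _ _ _ hC hρ,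
        compVal_spec m _ _ _ (cc_erase hC h2) hρ]
      abel
  · have hnall : ¬ ∃ C' : Finset V, IsCC Gr (B.erase u) C' ∧ ∀ jj, β jj ∈ C' := by
      rintro ⟨C', hC', hall⟩
      exact h1 ⟨C', hC', fun k => hall (j.succAbove k)⟩
    have hnE : ¬ ∃ E : Finset V, IsCC Gr ((B.erase u).erase w) E ∧ ∀ k, ρ k ∈ E := by
      rintro ⟨E, hE, hρE⟩
      obtain ⟨C, hC, hEC⟩ := exists_cc hE.2.1 (hE.1.trans (Finset.erase_subset _ _))
      exact h1 ⟨C, hC, fun k => hEC (hρE k)⟩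
    rw [cval_neg _ _ _ _ hnall, cval_neg _ _ _ _ hnall,
      compVal_neg m _ _ _ h1, compVal_neg m _ _ _ hnE]
end Aux3

section FinAux

lemma sAv {n : ℕ} (p : Fin (n + 1)) (i : Fin n) :
    ((p.succAbove i : Fin (n + 1)) : ℕ) = if (i : ℕ) < (p : ℕ) then (i : ℕ) else (i : ℕ) + 1 := by
  rw [Fin.succAbove]
  split_ifs with h1 h2 h2
  · rfl
  · exact absurd (by exact_mod_cast h1) h2
  · exact absurd (by exact_mod_cast h2 : Fin.castSucc i < p) h1
  · rfl

lemma pAv {n : ℕ} (p : Fin n) (i : Fin (n + 1)) :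
    ((p.predAbove i : Fin n) : ℕ) = if (p : ℕ) < (i : ℕ) then (i : ℕ) - 1 else (i : ℕ) := by
  rw [Fin.predAbove]
  split_ifs with h1 h2 h2
  · rfl
  · exact absurd (by exact_mod_cast h1) h2
  · exact absurd (by exact_mod_cast h2 : Fin.castSucc p < i) h1
  · rfl

lemma F1 {n : ℕ} (i : Fin (n + 2)) (j : Fin (n + 1)) :
    (i.succAbove j).succAbove (j.predAbove i) = i := by
  have hj := j.isLt; have hi := i.isLt
  apply Fin.ext
  rw [sAv, pAv, sAv]
  split_ifs <;> omega

lemma F2 {n : ℕ} (i : Fin (n + 2)) (j : Fin (n + 1)) :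
    (j.predAbove i).predAbove (i.succAbove j) = j := by
  have hj := j.isLt; have hi := i.isLt
  apply Fin.ext
  rw [pAv, sAv, pAv]
  split_ifs <;> omega

lemma F3 {n : ℕ} (i : Fin (n + 2)) (j : Fin (n + 1)) (k : Fin n) :
    i.succAbove (j.succAbove k) = (i.succAbove j).succAbove ((j.predAbove i).succAbove k) := by
  have hj := j.isLt; have hi := i.isLt; have hk := k.isLt
  apply Fin.ext
  rw [sAv, sAv, sAv, sAv, sAv, pAv]
  split_ifs <;> omega

lemma F4 {n : ℕ} (i : Fin (n + 2)) (j : Fin (n + 1)) :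
    ((-1 : ℤ) ^ ((i : ℕ) + (j : ℕ))) =
      -((-1 : ℤ) ^ (((i.succAbove j : Fin (n + 2)) : ℕ) + ((j.predAbove i : Fin (n + 1)) : ℕ))) := by
  have hj := j.isLt; have hi := i.isLt
  have h : (i : ℕ) + (j : ℕ) + 1 = ((i.succAbove j : Fin (n + 2)) : ℕ) + ((j.predAbove i : Fin (n + 1)) : ℕ)
      ∨ ((i.succAbove j : Fin (n + 2)) : ℕ) + ((j.predAbove i : Fin (n + 1)) : ℕ) + 1 = (i : ℕ) + (j : ℕ) := by
    rw [sAv, pAv]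
    split_ifs <;> omega
  rcases h with h | h
  · rw [← h, pow_succ]; ring
  · rw [← h, pow_succ]; ring
end FinAux

section Part1
variable {V : Type*} [Fintype V] [DecidableEq V] {M : Type*} [AddCommGroup M]

lemma dynD_dynD (Gr : SimpleGraph V) {p : ℕ} (m : Finset V → (Fin (p + 1) → V) → M)
    (B : Finset V) (α : Fin (p + 3) → V) : dynD Gr (dynD Gr m) B α = 0 := by
  classical
  set W : Fin (p + 3) → Fin (p + 2) → M := fun i j =>
    m B (fun k => α (i.succAbove (j.succAbove k)))
      - compVal Gr m B (α (i.succAbove j)) (fun k => α (i.succAbove (j.succAbove k)))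
      - compVal Gr m B (α i) (fun k => α (i.succAbove (j.succAbove k)))
      + compVal Gr m (B.erase (α i)) (α (i.succAbove j))
          (fun k => α (i.succAbove (j.succAbove k)))
    with hW
  have hstep : ∀ i : Fin (p + 3),
      dynD Gr m B (fun j => α (i.succAbove j))
        - compVal Gr (dynD Gr m) B (α i) (fun j => α (i.succAbove j))
      = ∑ j : Fin (p + 2), ((-1 : ℤ) ^ (j : ℕ)) • W i j := by
    intro i
    rw [compVal_eq_cval]
    have h1 : (fun S => dynD Gr m S (fun j => α (i.succAbove j)))
        = fun S => ∑ j : Fin (p + 2), ((-1 : ℤ) ^ (j : ℕ)) •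
            (m S (fun k => α (i.succAbove (j.succAbove k)))
              - compVal Gr m S (α (i.succAbove j))
                  (fun k => α (i.succAbove (j.succAbove k)))) := by
      funext S
      simp only [dynD]
    rw [h1, cval_sum]
    simp only [dynD]
    rw [← Finset.sum_sub_distrib]
    apply Finset.sum_congr rfl
    intro j _
    rw [cval_smul, ← smul_sub]
    congr 1
    rw [cval_sub, key m B (α i) (fun j' => α (i.succAbove j')) j]
    simp only [hW]
    abel
  have hmain : dynD Gr (dynD Gr m) B α
      = ∑ ij ∈ (Finset.univ ×ˢ Finset.univ : Finset (Fin (p + 3) × Fin (p + 2))),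
          ((-1 : ℤ) ^ ((ij.1 : ℕ) + (ij.2 : ℕ))) • W ij.1 ij.2 := by
    calc dynD Gr (dynD Gr m) B α
        = ∑ i : Fin (p + 3), ((-1 : ℤ) ^ (i : ℕ)) •
            (dynD Gr m B (fun j => α (i.succAbove j))
              - compVal Gr (dynD Gr m) B (α i) (fun j => α (i.succAbove j))) := rfl
      _ = ∑ i : Fin (p + 3), ((-1 : ℤ) ^ (i : ℕ)) •
            ∑ j : Fin (p + 2), ((-1 : ℤ) ^ (j : ℕ)) • W i j :=
          Finset.sum_congr rfl (fun i _ => by rw [hstep i])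
      _ = ∑ i : Fin (p + 3), ∑ j : Fin (p + 2),
            ((-1 : ℤ) ^ ((i : ℕ) + (j : ℕ))) • W i j := by
          apply Finset.sum_congr rfl
          intro i _
          rw [Finset.smul_sum]
          apply Finset.sum_congr rfl
          intro j _
          rw [smul_smul, ← pow_add]
      _ = ∑ ij ∈ (Finset.univ ×ˢ Finset.univ : Finset (Fin (p + 3) × Fin (p + 2))),
            ((-1 : ℤ) ^ ((ij.1 : ℕ) + (ij.2 : ℕ))) • W ij.1 ij.2 := by
          rw [Finset.sum_product]
  rw [hmain]
  have hWsym : ∀ (i : Fin (p + 3)) (j : Fin (p + 2)),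
      W (i.succAbove j) (j.predAbove i) = W i j := by
    intro i j
    have harg : (fun k => α ((i.succAbove j).succAbove ((j.predAbove i).succAbove k)))
        = fun k => α (i.succAbove (j.succAbove k)) :=
      funext fun k => congrArg α (F3 i j k).symm
    simp only [hW, harg, F1 i j]
    rw [compVal_erase_comm m B (α (i.succAbove j)) (α i)]
    abel
  apply Finset.sum_ninvolution
    (g := fun ij : Fin (p + 3) × Fin (p + 2) => (ij.1.succAbove ij.2, ij.2.predAbove ij.1))
  · intro a
    show ((-1 : ℤ) ^ ((a.1 : ℕ) + (a.2 : ℕ))) • W a.1 a.2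
        + ((-1 : ℤ) ^ (((a.1.succAbove a.2 : Fin (p + 3)) : ℕ)
            + ((a.2.predAbove a.1 : Fin (p + 2)) : ℕ))) • W (a.1.succAbove a.2) (a.2.predAbove a.1)
        = 0
    rw [hWsym a.1 a.2, ← add_smul, F4 a.1 a.2, neg_add_cancel, zero_smul]
  · intro a _
    intro h
    exact Fin.succAbove_ne a.1 a.2 (congrArg Prod.fst h)
  · intro a
    simp
  · intro a
    exact Prod.ext (F1 a.1 a.2) (F2 a.1 a.2)
end Part1

section Part2
variable {V : Type*} [Fintype V] [DecidableEq V] {M : Type*} [AddCommGroup M]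
variable {Gr : SimpleGraph V}

lemma sum_ccomps_split (m₀ : Finset V → M) {B : Finset V} {u w : V} {C₀ : Finset V}
    (hC : IsCC Gr (B.erase u) C₀) (hw : w ∈ C₀) :
    ∑ C ∈ ccomps Gr ((B.erase u).erase w), m₀ C
      = ∑ C ∈ ccomps Gr (C₀.erase w), m₀ C
        + ∑ C ∈ (ccomps Gr (B.erase u)).erase C₀, m₀ C := by
  have hdisj : Disjoint (ccomps Gr (C₀.erase w)) ((ccomps Gr (B.erase u)).erase C₀) := by
    rw [Finset.disjoint_left]
    intro E hE1 hE2
    rw [mem_ccomps] at hE1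
    obtain ⟨hne, hE2'⟩ := Finset.mem_erase.1 hE2
    rw [mem_ccomps] at hE2'
    apply hne
    apply cc_unique hE2' hC
    obtain ⟨x, hx⟩ := conn_nonempty hE1.2.1
    exact ⟨x, Finset.mem_inter.2 ⟨hx, (Finset.erase_subset _ _) (hE1.1 hx)⟩⟩
  rw [← Finset.sum_union hdisj]
  congr 1
  ext E
  rw [mem_ccomps, Finset.mem_union, mem_ccomps, Finset.mem_erase, mem_ccomps]
  constructor
  · intro hE
    obtain ⟨C, hCC, hEC⟩ := exists_cc hE.2.1 (hE.1.trans (Finset.erase_subset _ _))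
    by_cases hCeq : C = C₀
    · exact Or.inl (cc_restrict hC hE (hCeq ▸ hEC))
    · have hwC : w ∉ C := by
        intro hwC
        exact hCeq (cc_unique hCC hC ⟨w, Finset.mem_inter.2 ⟨hwC, hw⟩⟩)
      have hCsub : C ⊆ (B.erase u).erase w := fun x hx =>
        Finset.mem_erase.2 ⟨fun e => hwC (e ▸ hx), hCC.1 hx⟩
      have hCE : C = E := hE.2.2 C hEC hCsub hCC.2.1
      exact Or.inr ⟨fun e => hCeq (hCE.trans e), hCE ▸ hCC⟩
  · rintro (hE | ⟨hne, hE⟩)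
    · exact cc_trans hC hE
    · have hwE : w ∉ E := by
        intro hwE
        exact hne (cc_unique hE hC ⟨w, Finset.mem_inter.2 ⟨hwE, hw⟩⟩)
      exact cc_erase hE hwE

lemma dynD_dynD0 (m₀ : Finset V → M) (B : Finset V) (α : Fin 2 → V)
    (hmem : ∀ i, α i ∈ B) (hinj : Function.Injective α) :
    dynD Gr (dynD0 Gr m₀) B α = 0 := by
  classical
  have hne : α 0 ≠ α 1 := fun e => absurd (hinj e) (by decide)
  have hw : α 1 ∈ B.erase (α 0) := Finset.mem_erase.2 ⟨fun e => hne e.symm, hmem 1⟩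
  have hu : α 0 ∈ B.erase (α 1) := Finset.mem_erase.2 ⟨hne, hmem 0⟩
  obtain ⟨B₀, hB₀, hwB₀⟩ := exists_cc (conn_singleton (Gr := Gr) (α 1))
    (Finset.singleton_subset_iff.2 hw)
  obtain ⟨B₁, hB₁, huB₁⟩ := exists_cc (conn_singleton (Gr := Gr) (α 0))
    (Finset.singleton_subset_iff.2 hu)
  have hwB₀' : α 1 ∈ B₀ := hwB₀ (Finset.mem_singleton_self _)
  have huB₁' : α 0 ∈ B₁ := huB₁ (Finset.mem_singleton_self _)
  have hβ0 : (fun j : Fin 1 => α ((0 : Fin 2).succAbove j)) = fun _ : Fin 1 => α 1 :=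
    funext fun j => by rw [Fin.eq_zero j]; congr 1
  have hβ1 : (fun j : Fin 1 => α ((1 : Fin 2).succAbove j)) = fun _ : Fin 1 => α 0 :=
    funext fun j => by rw [Fin.eq_zero j]; congr 1
  have hexp : dynD Gr (dynD0 Gr m₀) B α
      = (dynD0 Gr m₀ B (fun _ : Fin 1 => α 1)
          - compVal Gr (dynD0 Gr m₀) B (α 0) (fun _ : Fin 1 => α 1))
        - (dynD0 Gr m₀ B (fun _ : Fin 1 => α 0)
          - compVal Gr (dynD0 Gr m₀) B (α 1) (fun _ : Fin 1 => α 0)) := by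
    calc dynD Gr (dynD0 Gr m₀) B α
        = ∑ i : Fin 2, ((-1 : ℤ) ^ (i : ℕ)) •
            (dynD0 Gr m₀ B (fun j => α (i.succAbove j))
              - compVal Gr (dynD0 Gr m₀) B (α i) (fun j => α (i.succAbove j))) := rfl
      _ = _ := by
          rw [Fin.sum_univ_two, hβ0, hβ1]
          norm_num
          abel
  rw [hexp]
  rw [compVal_spec _ _ _ _ hB₀ (fun j => hwB₀'), compVal_spec _ _ _ _ hB₁ (fun j => huB₁')]
  simp only [dynD0]
  have h0 : B₀ ∈ ccomps Gr (B.erase (α 0)) := mem_ccomps.2 hB₀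
  have h1 : B₁ ∈ ccomps Gr (B.erase (α 1)) := mem_ccomps.2 hB₁
  have hs0 := sum_ccomps_split (Gr := Gr) m₀ hB₀ hwB₀'
  have hs1 := sum_ccomps_split (Gr := Gr) m₀ hB₁ huB₁'
  have ht0 : ∑ C ∈ (ccomps Gr (B.erase (α 0))).erase B₀, m₀ C
      = ∑ C ∈ ccomps Gr (B.erase (α 0)), m₀ C - m₀ B₀ := by
    rw [← Finset.sum_erase_add _ _ h0]
    abel
  have ht1 : ∑ C ∈ (ccomps Gr (B.erase (α 1))).erase B₁, m₀ C
      = ∑ C ∈ ccomps Gr (B.erase (α 1)), m₀ C - m₀ B₁ := by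
    rw [← Finset.sum_erase_add _ _ h1]
    abel
  rw [ht0] at hs0
  rw [ht1] at hs1
  have hcomm : (B.erase (α 0)).erase (α 1) = (B.erase (α 1)).erase (α 0) :=
    Finset.erase_right_comm
  have hs0' : ∑ C ∈ ccomps Gr (B₀.erase (α 1)), m₀ C
      = ∑ C ∈ ccomps Gr ((B.erase (α 0)).erase (α 1)), m₀ C
        - (∑ C ∈ ccomps Gr (B.erase (α 0)), m₀ C - m₀ B₀) := by
    rw [hs0]; abel
  have hs1' : ∑ C ∈ ccomps Gr (B₁.erase (α 0)), m₀ C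
      = ∑ C ∈ ccomps Gr ((B.erase (α 0)).erase (α 1)), m₀ C
        - (∑ C ∈ ccomps Gr (B.erase (α 1)), m₀ C - m₀ B₁) := by
    rw [hcomm, hs1]; abel
  rw [hs0', hs1']
  abel
end Part2


/-- For a `D`-algebra `A` and a `D`-bimodule `M` over `A`, the Dynkin
differential squares to zero, so `(CD^*(A;M), d_D)` is a cochain complex: for any Dynkin
cochain (antisymmetric, with components in the prescribed subgroups) the composite of two
differentials vanishes on every component, in positive degrees as well as starting from
degree 0. -/
theorem stmt13 {V : Type*} [Fintype V] [DecidableEq V]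
    (Gr : SimpleGraph V) (hGr : Gr.Connected)
    {k A : Type*} [CommRing k] [Ring A] [Algebra k A]
    (AD : Finset V → Subalgebra k A)
    (hADmono : ∀ B C : Finset V, B ⊆ C → AD B ≤ AD C)
    (hADorth : ∀ B C : Finset V, Orth Gr B C → ∀ x ∈ AD B, ∀ y ∈ AD C, Commute x y)
    {M : Type*} [AddCommGroup M]
    (MB : Finset V → AddSubgroup M)
    (hMBmono : ∀ B C : Finset V, B ⊆ C → MB B ≤ MB C) :
    (∀ (p : ℕ) (m : Finset V → (Fin (p + 1) → V) → M),
      (∀ (B : Finset V) (α : Fin (p + 1) → V) (σ : Equiv.Perm (Fin (p + 1))),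
        m B (α ∘ σ) = (Equiv.Perm.sign σ : ℤ) • m B α) →
      (∀ (B : Finset V) (α : Fin (p + 1) → V), Conn Gr B → (∀ i, α i ∈ B) →
        Function.Injective α → m B α ∈ MB B) →
      ∀ (B : Finset V) (α : Fin (p + 3) → V), Conn Gr B → (∀ i, α i ∈ B) →
        Function.Injective α → dynD Gr (dynD Gr m) B α = 0) ∧
    (∀ m₀ : Finset V → M,
      (∀ B : Finset V, Conn Gr B → m₀ B ∈ MB B) →
      ∀ (B : Finset V) (α : Fin 2 → V), Conn Gr B → (∀ i, α i ∈ B) →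
        Function.Injective α → dynD Gr (dynD0 Gr m₀) B α = 0) := by
  constructor
  · intro p m _ _ B α _ _ _
    exact dynD_dynD Gr m B α
  · intro m₀ _ B α _ hmem hinj
    exact dynD_dynD0 m₀ B α hmem hinj
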